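/- Let H be the Hilbert space ℓ² of square-summable complex sequences indexed by ℕ with standard orthonormal basis (e_k). Let a, b, c : ℕ → ℂ be sequences with a(n) → α, b(n) → β, c(n) → γ as n → ∞, and let A, T : H → H be continuous linear operators whose matrix entries satisfy: ⟨A e_n, e_m⟩ = a(n) if m = n, b(m) if n = m + 1, c(n) if m = n + 1, and 0 otherwise; ⟨T e_n, e_m⟩ = α if m = n, β if n = m + 1, γ if m = n + 1, and 0 otherwise. Then A − T is a compact operator; that is, a tridiagonal operator whose diagonals converge is a compact perturbation of the Toeplitz operator built from the limiting diagonal values. -/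

import Mathlib

open Filter
open scoped ENNReal

noncomputable def tcpEval (i : ℕ) : lp (fun _ : ℕ => ℂ) 2 →L[ℂ] ℂ :=
  LinearMap.mkContinuous
    { toFun := fun x => x i
      map_add' := fun x y => by simp [lp.coeFn_add]
      map_smul' := fun c x => by simp [lp.coeFn_smul] }
    1 fun x => by
      show ‖(x : ℕ → ℂ) i‖ ≤ 1 * ‖x‖
      simpa using lp.norm_apply_le_norm (by norm_num : (2 : ℝ≥0∞) ≠ 0) x i

lemma tcp_rpow_two (x : ℝ) : x ^ ((2 : ℝ≥0∞)).toReal = x ^ 2 := by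
  have h : ((2 : ℝ≥0∞)).toReal = ((2 : ℕ) : ℝ) := by norm_num
  rw [h, Real.rpow_natCast]

@[simp] lemma tcpEval_apply (i : ℕ) (x : lp (fun _ : ℕ => ℂ) 2) : tcpEval i x = x i := rfl

lemma tcp_rankOne_compact {E F : Type*} [NormedAddCommGroup E] [NormedSpace ℂ E]
    [NormedAddCommGroup F] [NormedSpace ℂ F] (φ : E →L[ℂ] ℂ) (y : F) :
    IsCompactOperator fun x => φ x • y := by
  refine ⟨(fun c : ℂ => c • y) '' Metric.closedBall 0 1,
    (isCompact_closedBall 0 1).image (continuous_id.smul continuous_const), ?_⟩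
  have h0 : φ ⁻¹' Metric.closedBall 0 1 ∈ nhds (0 : E) := by
    apply φ.continuous.continuousAt.preimage_mem_nhds
    rw [map_zero]
    exact Metric.closedBall_mem_nhds 0 one_pos
  exact Filter.mem_of_superset h0 fun x hx => ⟨φ x, hx, rfl⟩

lemma tcp_sum_compact {ι E F : Type*} [NormedAddCommGroup E] [NormedSpace ℂ E]
    [NormedAddCommGroup F] [NormedSpace ℂ F] (s : Finset ι) (f : ι → E →L[ℂ] F) :
    (∀ i ∈ s, IsCompactOperator (f i)) → IsCompactOperator ⇑(∑ i ∈ s, f i) := by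
  classical
  refine Finset.induction_on s (fun _ => ?_) ?_
  · rw [Finset.sum_empty]
    exact isCompactOperator_zero
  · intro i t hi ih h
    rw [Finset.sum_insert hi]
    exact (h _ (Finset.mem_insert_self _ _)).add
      (ih fun j hj => h j (Finset.mem_insert_of_mem hj))

set_option maxHeartbeats 1000000 in
/-- A tridiagonal operator on `ℓ²` whose diagonals converge is a compact perturbation of
the tridiagonal Toeplitz operator built from the limiting diagonal values. -/
theorem tridiagonal_compact_perturbation_of_toeplitz
    (a b c : ℕ → ℂ) (α β γ : ℂ)
    (hA : Filter.Tendsto a Filter.atTop (nhds α))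
    (hB : Filter.Tendsto b Filter.atTop (nhds β))
    (hC : Filter.Tendsto c Filter.atTop (nhds γ))
    (A T : lp (fun _ : ℕ => ℂ) 2 →L[ℂ] lp (fun _ : ℕ => ℂ) 2)
    (hAe : ∀ m n : ℕ, (A (lp.single 2 n 1)) m =
      if m = n then a n else if n = m + 1 then b m else if m = n + 1 then c n else 0)
    (hTe : ∀ m n : ℕ, (T (lp.single 2 n 1)) m =
      if m = n then α else if n = m + 1 then β else if m = n + 1 then γ else 0) :
    IsCompactOperator (A - T) := by
  classical
  set D := A - T with hDdef
  set ent : ℕ → ℕ → ℂ := fun m n =>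
    if m = n then a n - α else if n = m + 1 then b m - β else if m = n + 1 then c n - γ
      else 0 with hent
  have hDe : ∀ m n : ℕ, (D (lp.single 2 n 1)) m = ent m n := by
    intro m n
    have h1 : (D (lp.single 2 n 1)) m = (A (lp.single 2 n 1)) m - (T (lp.single 2 n 1)) m := by
      rw [hDdef, ContinuousLinearMap.sub_apply, lp.coeFn_sub, Pi.sub_apply]
    rw [h1, hAe, hTe]
    simp only [hent]
    split_ifs <;> first | ring | (exfalso; omega)
  -- matrix action on a general vector
  have key : ∀ (y : lp (fun _ : ℕ => ℂ) 2) (m : ℕ),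
      HasSum (fun n => y n * ent m n) ((D y) m) := by
    intro y m
    have h1 : HasSum (fun n => lp.single 2 n (y n)) y :=
      lp.hasSum_single (by norm_num) y
    have h2 := (h1.mapL D).mapL (tcpEval m)
    have hfun : ∀ n, tcpEval m (D (lp.single 2 n (y n))) = y n * ent m n := by
      intro n
      have hsingle : lp.single 2 n (y n) = y n • (lp.single 2 n (1 : ℂ) : lp (fun _ : ℕ => ℂ) 2) := by
        rw [← lp.single_smul (E := fun _ : ℕ => ℂ) 2 n (y n) (1 : ℂ), smul_eq_mul, mul_one]
      rw [tcpEval_apply, hsingle, map_smul, lp.coeFn_smul, Pi.smul_apply, smul_eq_mul, hDe]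
    simpa [hfun] using h2
  -- the finite-rank truncations
  set P : ℕ → (lp (fun _ : ℕ => ℂ) 2 →L[ℂ] lp (fun _ : ℕ => ℂ) 2) :=
    fun N => ∑ i ∈ Finset.range N, (tcpEval i).smulRight (lp.single 2 i 1) with hP
  have hPsum : ∀ (N : ℕ) (y : lp (fun _ : ℕ => ℂ) 2),
      P N y = ∑ i ∈ Finset.range N, lp.single 2 i (y i) := by
    intro N y
    rw [hP]
    simp only [ContinuousLinearMap.sum_apply, ContinuousLinearMap.smulRight_apply,
      tcpEval_apply]
    refine Finset.sum_congr rfl fun i _ => ?_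
    rw [← lp.single_smul (E := fun _ : ℕ => ℂ) 2 i (y i) (1 : ℂ), smul_eq_mul, mul_one]
  have hPapply : ∀ (N : ℕ) (y : lp (fun _ : ℕ => ℂ) 2) (n : ℕ),
      (P N y) n = if n < N then y n else 0 := by
    intro N y n
    rw [hPsum, lp.coeFn_sum, Finset.sum_apply]
    by_cases hn : n < N
    · rw [if_pos hn, Finset.sum_eq_single n]
      · exact lp.single_apply_self (E := fun _ : ℕ => ℂ) 2 n (y n)
      · intro i _ hin
        exact lp.single_apply_ne (E := fun _ : ℕ => ℂ) 2 i _ (Ne.symm hin)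
      · intro hnn
        exact absurd (Finset.mem_range.mpr hn) hnn
    · rw [if_neg hn]
      refine Finset.sum_eq_zero fun i hi => ?_
      have hi' := Finset.mem_range.mp hi
      exact lp.single_apply_ne (E := fun _ : ℕ => ℂ) 2 i _ (by omega)
  have hFcompact : ∀ N : ℕ, IsCompactOperator (D.comp (P N)) := by
    intro N
    have hPc : IsCompactOperator (P N) := by
      rw [hP]
      refine tcp_sum_compact _ _ fun i _ => ?_
      exact tcp_rankOne_compact (tcpEval i) (lp.single 2 i 1)
    exact hPc.continuous_comp D.continuous
  -- the key norm estimate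
  have estimate : ∀ δ : ℝ, 0 ≤ δ →
      ∀ M : ℕ, (∀ n, M ≤ n → ‖a n - α‖ ≤ δ ∧ ‖b n - β‖ ≤ δ ∧ ‖c n - γ‖ ≤ δ) →
      ∀ z : lp (fun _ : ℕ => ℂ) 2, (∀ n, n ≤ M → z n = 0) →
      ‖D z‖ ≤ 3 * δ * ‖z‖ := by
    intro δ hδ M hM z hz
    set u3 : ℕ → ℂ := fun m => Nat.rec 0 (fun k _ => z k) m with hu3
    have hu3succ : ∀ k, u3 (k + 1) = z k := fun k => rfl
    have hu30 : u3 0 = 0 := rfl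
    have hterm : ∀ (j : ℕ) (coef : ℂ), (M < j → ‖coef‖ ≤ δ) → ‖z j * coef‖ ≤ δ * ‖z j‖ := by
      intro j coef hcoef
      rcases le_or_gt j M with h | h
      · simp [hz j h]
      · rw [norm_mul, mul_comm]
        exact mul_le_mul_of_nonneg_right (hcoef h) (norm_nonneg _)
    have bound : ∀ m, ‖(D z) m‖ ≤ δ * ‖z m‖ + δ * ‖z (m + 1)‖ + δ * ‖u3 m‖ := by
      intro m
      match m with
      | 0 =>
        have hvan : ∀ n ∉ ({0, 1} : Finset ℕ), z n * ent 0 n = 0 := by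
          intro n hn
          simp only [Finset.mem_insert, Finset.mem_singleton] at hn
          push_neg at hn
          have : ent 0 n = 0 := by
            simp only [hent]
            split_ifs <;> first | rfl | contradiction | (exfalso; omega)
          rw [this, mul_zero]
        have hsum : HasSum (fun n => z n * ent 0 n) (z 0 * ent 0 0 + z 1 * ent 0 1) := by
          have h := hasSum_sum_of_ne_finset_zero (L := SummationFilter.unconditional ℕ) hvan
          rwa [Finset.sum_pair (by norm_num : (0 : ℕ) ≠ 1)] at h
        have hval : (D z) 0 = z 0 * ent 0 0 + z 1 * ent 0 1 := (key z 0).unique hsum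
        have h00 : ent 0 0 = a 0 - α := by simp [hent]
        have h01 : ent 0 1 = b 0 - β := by simp [hent]
        rw [hval, h00, h01, hu30]
        calc ‖z 0 * (a 0 - α) + z 1 * (b 0 - β)‖
            ≤ ‖z 0 * (a 0 - α)‖ + ‖z 1 * (b 0 - β)‖ := norm_add_le _ _
          _ ≤ δ * ‖z 0‖ + δ * ‖z 1‖ := by
              gcongr
              · exact hterm 0 _ (fun h => (hM 0 (by omega)).1)
              · exact hterm 1 _ (fun h => (hM 0 (by omega)).2.1)
          _ ≤ δ * ‖z 0‖ + δ * ‖z 1‖ + δ * ‖(0 : ℂ)‖ := by simp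
      | (k + 1) =>
        have hvan : ∀ n ∉ ({k, k + 1, k + 2} : Finset ℕ), z n * ent (k + 1) n = 0 := by
          intro n hn
          simp only [Finset.mem_insert, Finset.mem_singleton] at hn
          push_neg at hn
          have : ent (k + 1) n = 0 := by
            simp only [hent]
            split_ifs <;> first | rfl | contradiction | (exfalso; omega)
          rw [this, mul_zero]
        have hsum : HasSum (fun n => z n * ent (k + 1) n)
            (z k * ent (k + 1) k + (z (k + 1) * ent (k + 1) (k + 1)
              + z (k + 2) * ent (k + 1) (k + 2))) := by
          have h := hasSum_sum_of_ne_finset_zero (L := SummationFilter.unconditional ℕ) hvan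
          rwa [show ({k, k + 1, k + 2} : Finset ℕ) = insert k {k + 1, k + 2} from rfl,
            Finset.sum_insert (by simp only [Finset.mem_insert, Finset.mem_singleton]; omega),
            Finset.sum_pair (by omega : k + 1 ≠ k + 2)] at h
        have hval := (key z (k + 1)).unique hsum
        have h1 : ent (k + 1) k = c k - γ := by simp only [hent]; split_ifs <;> first | rfl | contradiction | (exfalso; omega)
        have h2 : ent (k + 1) (k + 1) = a (k + 1) - α := by simp [hent]
        have h3 : ent (k + 1) (k + 2) = b (k + 1) - β := by
          simp only [hent]; split_ifs <;> first | rfl | contradiction | (exfalso; omega)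
        rw [hval, h1, h2, h3, hu3succ]
        calc ‖z k * (c k - γ) + (z (k + 1) * (a (k + 1) - α) + z (k + 2) * (b (k + 1) - β))‖
            ≤ ‖z k * (c k - γ)‖ + (‖z (k + 1) * (a (k + 1) - α)‖
              + ‖z (k + 2) * (b (k + 1) - β)‖) :=
              (norm_add_le _ _).trans (add_le_add le_rfl (norm_add_le _ _))
          _ ≤ δ * ‖z k‖ + (δ * ‖z (k + 1)‖ + δ * ‖z (k + 2)‖) := by
              gcongr
              · exact hterm k _ (fun h => (hM k (by omega)).2.2)
              · exact hterm (k + 1) _ (fun h => (hM (k + 1) (by omega)).1)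
              · exact hterm (k + 2) _ (fun h => (hM (k + 1) (by omega)).2.1)
          _ = δ * ‖z (k + 1)‖ + δ * ‖z (k + 2)‖ + δ * ‖z k‖ := by ring
    -- sum the squares
    have hDz2 : HasSum (fun m => ‖(D z) m‖ ^ 2) (‖D z‖ ^ 2) := by
      have h := lp.hasSum_norm (p := 2) (by norm_num) (D z)
      simpa only [tcp_rpow_two] using h
    have hz2 : HasSum (fun m => ‖z m‖ ^ 2) (‖z‖ ^ 2) := by
      have h := lp.hasSum_norm (p := 2) (by norm_num) z
      simpa only [tcp_rpow_two] using h
    have hz2s : HasSum (fun m => ‖z (m + 1)‖ ^ 2) (‖z‖ ^ 2 - ‖z 0‖ ^ 2) := by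
      refine (hasSum_nat_add_iff (f := fun m => ‖z m‖ ^ 2) 1).mpr ?_
      simpa using hz2
    have hu32 : HasSum (fun m => ‖u3 m‖ ^ 2) (‖z‖ ^ 2) := by
      have h := (hasSum_nat_add_iff (f := fun m => ‖u3 m‖ ^ 2) 1).mp
        (by simpa [hu3succ] using hz2)
      simpa [hu30] using h
    have hpt : ∀ m, ‖(D z) m‖ ^ 2 ≤ 3 * δ ^ 2 * ‖z m‖ ^ 2 + 3 * δ ^ 2 * ‖z (m + 1)‖ ^ 2
        + 3 * δ ^ 2 * ‖u3 m‖ ^ 2 := by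
      intro m
      have h := bound m
      have h1 : ‖(D z) m‖ ^ 2 ≤ (δ * ‖z m‖ + δ * ‖z (m + 1)‖ + δ * ‖u3 m‖) ^ 2 :=
        pow_le_pow_left₀ (norm_nonneg _) h 2
      nlinarith [sq_nonneg (‖z m‖ - ‖z (m + 1)‖), sq_nonneg (‖z m‖ - ‖u3 m‖),
        sq_nonneg (‖z (m + 1)‖ - ‖u3 m‖), sq_nonneg δ, h1]
    have hsums : HasSum (fun m => 3 * δ ^ 2 * ‖z m‖ ^ 2 + 3 * δ ^ 2 * ‖z (m + 1)‖ ^ 2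
        + 3 * δ ^ 2 * ‖u3 m‖ ^ 2)
        (3 * δ ^ 2 * ‖z‖ ^ 2 + 3 * δ ^ 2 * (‖z‖ ^ 2 - ‖z 0‖ ^ 2) + 3 * δ ^ 2 * ‖z‖ ^ 2) :=
      ((hz2.mul_left _).add (hz2s.mul_left _)).add (hu32.mul_left _)
    have hle : ‖D z‖ ^ 2 ≤ 3 * δ ^ 2 * ‖z‖ ^ 2 + 3 * δ ^ 2 * (‖z‖ ^ 2 - ‖z 0‖ ^ 2)
        + 3 * δ ^ 2 * ‖z‖ ^ 2 := hasSum_le hpt hDz2 hsums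
    have hb : (0 : ℝ) ≤ 3 * δ * ‖z‖ := by positivity
    have h2 : ‖D z‖ ^ 2 ≤ (3 * δ * ‖z‖) ^ 2 := by
      nlinarith [hle, sq_nonneg (δ * ‖z 0‖)]
    nlinarith [h2, norm_nonneg (D z), hb, sq_nonneg (‖D z‖ - 3 * δ * ‖z‖)]
  -- conclude by approximation
  refine isCompactOperator_of_tendsto (l := (atTop : Filter ℕ)) (F := fun N => D.comp (P N)) (f := D) ?_
    (Filter.Eventually.of_forall hFcompact)
  rw [Metric.tendsto_atTop]
  intro ε hε
  have hδpos : (0 : ℝ) < ε / 7 := by linarith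
  set δ := ε / 7 with hδdef
  obtain ⟨Na, hNa⟩ := (Metric.tendsto_atTop.mp hA) δ hδpos
  obtain ⟨Nb, hNb⟩ := (Metric.tendsto_atTop.mp hB) δ hδpos
  obtain ⟨Nc, hNc⟩ := (Metric.tendsto_atTop.mp hC) δ hδpos
  set N₀ := max Na (max Nb Nc) with hN₀
  refine ⟨N₀ + 1, fun N hN => ?_⟩
  rw [dist_eq_norm, ← norm_sub_rev]
  have hMsmall : ∀ n, N - 1 ≤ n → ‖a n - α‖ ≤ δ ∧ ‖b n - β‖ ≤ δ ∧ ‖c n - γ‖ ≤ δ := by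
    intro n hn
    have hna : Na ≤ n := by omega
    have hnb : Nb ≤ n := by omega
    have hnc : Nc ≤ n := by omega
    refine ⟨?_, ?_, ?_⟩
    · simpa [dist_eq_norm] using (hNa n hna).le
    · simpa [dist_eq_norm] using (hNb n hnb).le
    · simpa [dist_eq_norm] using (hNc n hnc).le
  have hbound : ‖D - D.comp (P N)‖ ≤ 3 * δ := by
    refine ContinuousLinearMap.opNorm_le_bound _ (by positivity) fun y => ?_
    set z := y - P N y with hzdef
    have happ : (D - D.comp (P N)) y = D z := by
      rw [ContinuousLinearMap.sub_apply, ContinuousLinearMap.comp_apply, ← map_sub]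
    have hzzero : ∀ n, n ≤ N - 1 → z n = 0 := by
      intro n hn
      have hn' : n < N := by omega
      rw [hzdef, lp.coeFn_sub, Pi.sub_apply, hPapply, if_pos hn', sub_self]
    have hzy : ‖z‖ ≤ ‖y‖ := by
      have h1 := lp.norm_compl_sum_single (p := 2) (by norm_num) y (Finset.range N)
      have h2 : z = y - ∑ i ∈ Finset.range N, lp.single 2 i (y i) := by
        rw [hzdef, hPsum]
      rw [← h2] at h1
      simp only [tcp_rpow_two] at h1
      have h4 : (0 : ℝ) ≤ ∑ i ∈ Finset.range N, ‖y i‖ ^ 2 :=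
        Finset.sum_nonneg fun i _ => sq_nonneg _
      nlinarith [norm_nonneg z, norm_nonneg y]
    rw [happ]
    calc ‖D z‖ ≤ 3 * δ * ‖z‖ := estimate δ hδpos.le (N - 1) hMsmall z hzzero
      _ ≤ 3 * δ * ‖y‖ := by gcongr
  calc ‖D - D.comp (P N)‖ ≤ 3 * δ := hbound
    _ < ε := by rw [hδdef]; linarith
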